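/- Let m, n, r be positive integers with r < min{m, n}, and let X = U diag(σ₁, …, σ_{r̲}, 0, …, 0) Vᵀ with r̲ = rank X ≥ 1, U ∈ ℝ^{m×(r+1)}, V ∈ ℝ^{n×(r+1)} having orthonormal columns, and σ₁ ≥ … ≥ σ_{r̲} > 0. Fix t₀ > 0 and set Z := (σ_{r̲}/t₀) U diag(0_{(r̲−1)×(r̲−1)}, [[−1, 1/2], [1/2, 0]], (3/4) I_{r−r̲}) Vᵀ. Then for every t > 0 with τ := t/t₀ ∈ (12/17, 1) ∪ (1, 4/3), the matrix X + t Z has rank r + 1 and its nonzero singular values are σ₁, …, σ_{r̲−1}, the value (3/4) τ σ_{r̲} with multiplicity r − r̲, and the two values σ_{r̲} λ₊(τ) and −σ_{r̲} λ₋(τ), where λ_±(τ) = (1 − τ ± √((1 − τ)² + τ²))/2. -/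

import Mathlib

set_option linter.unusedSectionVars false
set_option linter.unusedVariables false
set_option maxHeartbeats 1600000


open Filter Topology Matrix

/-- `λ₊(τ) = (1 - τ + √((1 - τ)² + τ²)) / 2`. -/
noncomputable def lamP (τ : ℝ) : ℝ := (1 - τ + Real.sqrt ((1 - τ) ^ 2 + τ ^ 2)) / 2

/-- `λ₋(τ) = (1 - τ - √((1 - τ)² + τ²)) / 2`. -/
noncomputable def lamM (τ : ℝ) : ℝ := (1 - τ - Real.sqrt ((1 - τ) ^ 2 + τ ^ 2)) / 2

/-- The `(r+1) × (r+1)` block-diagonal matrix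
`diag(0_{(k−1)×(k−1)}, [[−1, 1/2], [1/2, 0]], (3/4) I_{r−k})`. -/
noncomputable def blockD (r k : ℕ) : Matrix (Fin (r + 1)) (Fin (r + 1)) ℝ :=
  Matrix.of fun i j : Fin (r + 1) =>
    if (i : ℕ) = k - 1 ∧ (j : ℕ) = k - 1 then -1
    else if ((i : ℕ) = k - 1 ∧ (j : ℕ) = k) ∨ ((i : ℕ) = k ∧ (j : ℕ) = k - 1) then 1 / 2
    else if (i : ℕ) = (j : ℕ) ∧ k + 1 ≤ (i : ℕ) then 3 / 4
    else 0

namespace SVDAux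

variable {ι : Type*} [Fintype ι] [DecidableEq ι]

lemma std_transpose (x y : ι) (c : ℝ) :
    (Matrix.single x y c)ᵀ = Matrix.single y x c := by
  ext i j
  simp [Matrix.single, and_comm]

lemma diagonal_mul_std (f : ι → ℝ) (x y : ι) (c : ℝ) :
    diagonal f * Matrix.single x y c = Matrix.single x y (f x * c) := by
  ext i j
  simp only [diagonal_mul, Matrix.single, of_apply, mul_ite, mul_zero]
  split_ifs with h
  · rw [h.1]
  · rfl

lemma std_mul_diagonal (f : ι → ℝ) (x y : ι) (c : ℝ) :
    Matrix.single x y c * diagonal f = Matrix.single x y (c * f y) := by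
  ext i j
  simp only [mul_diagonal, Matrix.single, of_apply, ite_mul, zero_mul]
  split_ifs with h
  · rw [h.2]
  · rfl

lemma block_mul_block (a b : ι) (hab : a ≠ b) (u v : ι → ℝ)
    (hua : u a = 0) (hub : u b = 0) (hva : v a = 0) (hvb : v b = 0)
    (p₁ p₂ p₃ p₄ q₁ q₂ q₃ q₄ : ℝ) :
    (diagonal u + Matrix.single a a p₁ + Matrix.single b a p₂ +
      Matrix.single a b p₃ + Matrix.single b b p₄) *
    (diagonal v + Matrix.single a a q₁ + Matrix.single b a q₂ +
      Matrix.single a b q₃ + Matrix.single b b q₄) =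
    diagonal (u * v) + Matrix.single a a (p₁ * q₁ + p₃ * q₂) +
      Matrix.single b a (p₂ * q₁ + p₄ * q₂) +
      Matrix.single a b (p₁ * q₃ + p₃ * q₄) +
      Matrix.single b b (p₂ * q₃ + p₄ * q₄) := by
  have mne1 : ∀ (x y : ι) (c d : ℝ),
      Matrix.single x a c * Matrix.single b y d = 0 := fun x y c d =>
    Matrix.single_mul_single_of_ne c x a b hab d
  have mne2 : ∀ (x y : ι) (c d : ℝ),
      Matrix.single x b c * Matrix.single a y d = 0 := fun x y c d =>
    Matrix.single_mul_single_of_ne c x b a hab.symm d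
  simp only [add_mul, mul_add, diagonal_mul_diagonal, diagonal_mul_std, std_mul_diagonal,
    Matrix.single_mul_single_same, mne1, mne2,
    hua, hub, hva, hvb, zero_mul, mul_zero, Matrix.single_zero, Matrix.single_add,
    add_zero, zero_add, Pi.mul_def]
  abel

lemma diag_block_eq_one (a b : ι) (hab : a ≠ b) (u : ι → ℝ)
    (hu : ∀ i, i ≠ a → i ≠ b → u i = 1) (hua : u a = 0) (hub : u b = 0) :
    diagonal (u * u) + Matrix.single a a 1 + Matrix.single b b 1 = 1 := by
  ext i j
  simp only [Matrix.add_apply, diagonal_apply, Matrix.single, of_apply, one_apply, Pi.mul_apply]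
  by_cases hij : i = j
  · subst hij
    by_cases hia : i = a
    · subst hia
      simp [hua, hab.symm]
    · by_cases hib : i = b
      · subst hib
        simp [hub, hab]
      · simp [hu i hia hib, Ne.symm hia, Ne.symm hib]
  · have h1 : ¬(a = i ∧ a = j) := by rintro ⟨rfl, rfl⟩; exact hij rfl
    have h2 : ¬(b = i ∧ b = j) := by rintro ⟨rfl, rfl⟩; exact hij rfl
    simp [hij, h1, h2]

lemma assemble_one (a b : ι) (hab : a ≠ b) (u : ι → ℝ)
    (hu : ∀ i, i ≠ a → i ≠ b → u i = 1) (hua : u a = 0) (hub : u b = 0)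
    {x y z w : ℝ} (hx : x = 1) (hy : y = 0) (hz : z = 0) (hw : w = 1) :
    diagonal (u * u) + Matrix.single a a x + Matrix.single b a y +
      Matrix.single a b z + Matrix.single b b w = 1 := by
  subst hx hy hz hw
  simp only [Matrix.single_zero, add_zero]
  exact diag_block_eq_one a b hab u hu hua hub

lemma assemble_eq (a b : ι) {f g : ι → ℝ} (hfg : f = g) {x1 x2 x3 x4 y1 y2 y3 y4 : ℝ}
    (h1 : x1 = y1) (h2 : x2 = y2) (h3 : x3 = y3) (h4 : x4 = y4) :
    diagonal f + Matrix.single a a x1 + Matrix.single b a x2 +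
      Matrix.single a b x3 + Matrix.single b b x4 =
    diagonal g + Matrix.single a a y1 + Matrix.single b a y2 +
      Matrix.single a b y3 + Matrix.single b b y4 := by
  subst hfg h1 h2 h3 h4; rfl

end SVDAux

noncomputable def dFun (r k : ℕ) (σ : Fin (r+1) → ℝ) (τ c : ℝ) : Fin (r+1) → ℝ := fun i =>
  if (i:ℕ) < k-1 then σ i else if k+1 ≤ (i:ℕ) then 3/4*τ*c else 0

noncomputable def sFun (r k : ℕ) (σ : Fin (r+1) → ℝ) (τ c : ℝ) : Fin (r+1) → ℝ := fun i =>
  if (i:ℕ) < k-1 then σ i else if (i:ℕ) = k-1 then c * lamP τ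
  else if (i:ℕ) = k then -(c * lamM τ) else 3/4*τ*c

set_option maxHeartbeats 1600000 in
lemma middle_decomp (r k : ℕ) (hk1 : 1 ≤ k) (hkr : k ≤ r) (a b : Fin (r+1))
    (ha : (a:ℕ) = k-1) (hb : (b:ℕ) = k)
    (σ : Fin (r+1) → ℝ) (hσzero : ∀ i : Fin (r+1), k ≤ (i:ℕ) → σ i = 0) (τ : ℝ) :
    diagonal σ + (τ * σ a) • blockD r k =
      diagonal (dFun r k σ τ (σ a)) +
      Matrix.single a a (σ a * (1-τ)) +
      Matrix.single b a (σ a * (τ/2)) +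
      Matrix.single a b (σ a * (τ/2)) +
      Matrix.single b b (0:ℝ) := by
  ext i j
  simp only [Matrix.add_apply, Matrix.smul_apply, diagonal_apply, blockD, of_apply, Matrix.single, dFun,
    smul_eq_mul, Fin.ext_iff]
  split_ifs <;>
    first
      | (exfalso; omega)
      | ring1
      | (rw [hσzero i (by omega)]; ring1)
      | (rw [show σ i = σ a from congrArg σ (Fin.val_injective (by omega))]; ring1)

set_option maxHeartbeats 1600000 in
lemma diag_s_decomp (r k : ℕ) (hk1 : 1 ≤ k) (hkr : k ≤ r) (a b : Fin (r+1))
    (ha : (a:ℕ) = k-1) (hb : (b:ℕ) = k) (σ : Fin (r+1) → ℝ) (τ c : ℝ) :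
    diagonal (sFun r k σ τ c) =
      diagonal (dFun r k σ τ c) +
      Matrix.single a a (c * lamP τ) +
      Matrix.single b a (0:ℝ) +
      Matrix.single a b (0:ℝ) +
      Matrix.single b b (-(c * lamM τ)) := by
  ext i j
  simp only [Matrix.add_apply, diagonal_apply, Matrix.single, of_apply, sFun, dFun, Fin.ext_iff]
  split_ifs <;>
    first
      | (exfalso; omega)
      | ring1

lemma map_sFun (r k : ℕ) (hk1 : 1 ≤ k) (hkr : k ≤ r) (a b : Fin (r+1))
    (ha : (a:ℕ) = k-1) (hb : (b:ℕ) = k) (σ : Fin (r+1) → ℝ) (τ c : ℝ) :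
    Finset.univ.val.map (sFun r k σ τ c) =
      (Finset.univ.filter (fun i : Fin (r + 1) => (i : ℕ) < k - 1)).val.map σ +
      Multiset.replicate (r - k) (3 / 4 * τ * c) +
      ({c * lamP τ, -(c * lamM τ)} : Multiset ℝ) := by
  classical
  have hsplit1 := Multiset.filter_add_not (fun i : Fin (r+1) => (i:ℕ) < k - 1)
    (Finset.univ.val)
  have hsplit2 := Multiset.filter_add_not (fun i : Fin (r+1) => k + 1 ≤ (i:ℕ))
    (Multiset.filter (fun i : Fin (r+1) => ¬ (i:ℕ) < k - 1) Finset.univ.val)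
  conv_lhs => rw [← hsplit1, ← hsplit2]
  rw [Multiset.map_add, Multiset.map_add]
  have e1 : Multiset.map (sFun r k σ τ c)
      (Multiset.filter (fun i : Fin (r+1) => (i:ℕ) < k - 1) Finset.univ.val) =
      (Finset.univ.filter (fun i : Fin (r + 1) => (i : ℕ) < k - 1)).val.map σ := by
    rw [Finset.filter_val]
    refine Multiset.map_congr rfl (fun x hx => ?_)
    have hx' := (Multiset.mem_filter.mp hx).2
    simp only [sFun]
    rw [if_pos hx']
  have e2 : Multiset.map (sFun r k σ τ c)
      (Multiset.filter (fun i : Fin (r+1) => k + 1 ≤ (i:ℕ))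
        (Multiset.filter (fun i : Fin (r+1) => ¬ (i:ℕ) < k - 1) Finset.univ.val)) =
      Multiset.replicate (r - k) (3 / 4 * τ * c) := by
    rw [Multiset.filter_filter]
    have : Multiset.map (sFun r k σ τ c)
        (Multiset.filter (fun i : Fin (r+1) => k + 1 ≤ (i:ℕ) ∧ ¬ (i:ℕ) < k - 1)
          Finset.univ.val) =
        Multiset.map (fun _ => 3 / 4 * τ * c)
          (Multiset.filter (fun i : Fin (r+1) => k + 1 ≤ (i:ℕ) ∧ ¬ (i:ℕ) < k - 1)
            Finset.univ.val) := by
      refine Multiset.map_congr rfl (fun x hx => ?_)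
      have hx' := (Multiset.mem_filter.mp hx).2
      simp only [sFun]
      rw [if_neg (by omega), if_neg (by omega), if_neg (by omega)]
    rw [this, Multiset.map_const']
    congr 1
    rw [← Finset.filter_val]
    show (Finset.filter _ Finset.univ).card = r - k
    by_cases hkr' : k = r
    · subst hkr'
      rw [Finset.filter_eq_empty_iff.mpr (fun i _ => by have := i.isLt; omega)]
      simp
    · have hlt : k + 1 < r + 1 := by omega
      have : Finset.filter (fun i : Fin (r+1) => k + 1 ≤ (i:ℕ) ∧ ¬ (i:ℕ) < k - 1)
          Finset.univ = Finset.Ici (⟨k+1, hlt⟩ : Fin (r+1)) := by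
        ext i
        simp only [Finset.mem_filter, Finset.mem_univ, true_and, Finset.mem_Ici, Fin.le_def]
        omega
      rw [this, Fin.card_Ici]
      simp only [Fin.val_mk]
      omega
  have e3 : Multiset.map (sFun r k σ τ c)
      (Multiset.filter (fun i : Fin (r+1) => ¬ k + 1 ≤ (i:ℕ))
        (Multiset.filter (fun i : Fin (r+1) => ¬ (i:ℕ) < k - 1) Finset.univ.val)) =
      ({c * lamP τ, -(c * lamM τ)} : Multiset ℝ) := by
    rw [Multiset.filter_filter]
    have hne : a ∉ ({b} : Finset (Fin (r+1))) := by
      simp only [Finset.mem_singleton, Fin.ext_iff]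
      omega
    have hset : Multiset.filter (fun i : Fin (r+1) => ¬ k + 1 ≤ (i:ℕ) ∧ ¬ (i:ℕ) < k - 1)
        Finset.univ.val = a ::ₘ {b} := by
      rw [← Finset.filter_val]
      have : Finset.filter (fun i : Fin (r+1) => ¬ k + 1 ≤ (i:ℕ) ∧ ¬ (i:ℕ) < k - 1)
          Finset.univ = ({a, b} : Finset (Fin (r+1))) := by
        ext i
        simp only [Finset.mem_filter, Finset.mem_univ, true_and, Finset.mem_insert,
          Finset.mem_singleton, Fin.ext_iff]
        omega
      rw [this]
      rw [Finset.insert_val_of_notMem hne]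
      rfl
    rw [hset, Multiset.map_cons, Multiset.map_singleton]
    have hsa : sFun r k σ τ c a = c * lamP τ := by
      simp only [sFun]
      rw [if_neg (by omega), if_pos (by omega)]
    have hsb : sFun r k σ τ c b = -(c * lamM τ) := by
      simp only [sFun]
      rw [if_neg (by omega), if_neg (by omega), if_pos (by omega)]
    rw [hsa, hsb]
    rfl
  rw [e1, e2, e3, ← add_assoc]

/-- for `t > 0` with `τ = t/t₀ ∈ (12/17, 1) ∪ (1, 4/3)`, the matrix `X + t Z`
has rank `r + 1` and its nonzero singular values (counted with multiplicity, i.e., there is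
a reduced SVD `X + t Z = U' diag(s) V'ᵀ` with positive diagonal) are
`σ₁, …, σ_{k−1}`, the value `(3/4) τ σ_k` with multiplicity `r − k`, and the two values
`σ_k λ₊(τ)` and `−σ_k λ₋(τ)`. -/
theorem singular_values_of_X_plus_tZ
    (m n r k : ℕ) (hm : 0 < m) (hn : 0 < n) (hr : 0 < r)
    (hrm : r < m) (hrn : r < n) (hk1 : 1 ≤ k) (hkr : k ≤ r)
    (U : Matrix (Fin m) (Fin (r + 1)) ℝ) (V : Matrix (Fin n) (Fin (r + 1)) ℝ)
    (hU : Uᵀ * U = 1) (hV : Vᵀ * V = 1)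
    (σ : Fin (r + 1) → ℝ)
    (hσmono : ∀ i j : Fin (r + 1), i ≤ j → σ j ≤ σ i)
    (hσpos : ∀ i : Fin (r + 1), (i : ℕ) < k → 0 < σ i)
    (hσzero : ∀ i : Fin (r + 1), k ≤ (i : ℕ) → σ i = 0)
    (X : Matrix (Fin m) (Fin n) ℝ)
    (hX : X = U * Matrix.diagonal σ * Vᵀ)
    (hrank : X.rank = k)
    (t₀ : ℝ) (ht₀ : 0 < t₀)
    (Z : Matrix (Fin m) (Fin n) ℝ)
    (hZ : Z = (σ ⟨k - 1, by omega⟩ / t₀) • (U * blockD r k * Vᵀ))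
    (t : ℝ) (ht : 0 < t)
    (hτ : t / t₀ ∈ Set.Ioo (12 / 17 : ℝ) 1 ∪ Set.Ioo (1 : ℝ) (4 / 3)) :
    (X + t • Z).rank = r + 1 ∧
    ∃ (U' : Matrix (Fin m) (Fin (r + 1)) ℝ) (V' : Matrix (Fin n) (Fin (r + 1)) ℝ)
      (s : Fin (r + 1) → ℝ),
      U'ᵀ * U' = 1 ∧ V'ᵀ * V' = 1 ∧ (∀ i, 0 < s i) ∧
      X + t • Z = U' * Matrix.diagonal s * V'ᵀ ∧
      Finset.univ.val.map s =
        (Finset.univ.filter (fun i : Fin (r + 1) => (i : ℕ) < k - 1)).val.map σ +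
        Multiset.replicate (r - k) (3 / 4 * (t / t₀) * σ ⟨k - 1, by omega⟩) +
        {σ ⟨k - 1, by omega⟩ * lamP (t / t₀), -(σ ⟨k - 1, by omega⟩ * lamM (t / t₀))} := by
  classical
  obtain ⟨τ, hτdef⟩ : ∃ x : ℝ, t / t₀ = x := ⟨t / t₀, rfl⟩
  rw [hτdef] at hτ ⊢
  have hτpos : 0 < τ := by
    rcases hτ with h | h
    · have := h.1; linarith
    · have := h.1; linarith
  -- indices
  have hak : k - 1 < r + 1 := by omega
  have hbk : k < r + 1 := by omega
  set a : Fin (r + 1) := ⟨k - 1, hak⟩ with hadef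
  set b : Fin (r + 1) := ⟨k, hbk⟩ with hbdef
  have ha : (a : ℕ) = k - 1 := rfl
  have hb : (b : ℕ) = k := rfl
  have hab : a ≠ b := Fin.ne_of_val_ne (by omega)
  have hZ' : Z = (σ a / t₀) • (U * blockD r k * Vᵀ) := hZ
  have hσa : 0 < σ a := hσpos a (by omega)
  -- scalar facts
  obtain ⟨D, hDdef⟩ : ∃ x : ℝ, Real.sqrt ((1 - τ) ^ 2 + τ ^ 2) = x :=
    ⟨Real.sqrt ((1 - τ) ^ 2 + τ ^ 2), rfl⟩
  have hLdef : lamP τ = (1 - τ + D) / 2 := by rw [lamP, hDdef]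
  have hMdef : lamM τ = (1 - τ - D) / 2 := by rw [lamM, hDdef]
  have hDnn : 0 ≤ D := hDdef ▸ Real.sqrt_nonneg _
  have hD2 : D ^ 2 = (1 - τ) ^ 2 + τ ^ 2 := by
    rw [← hDdef]; exact Real.sq_sqrt (by positivity)
  have hLpos : 0 < lamP τ := by rw [hLdef]; nlinarith [mul_pos hτpos hτpos]
  have hMneg : lamM τ < 0 := by rw [hMdef]; nlinarith [mul_pos hτpos hτpos]
  have hsum : lamP τ + lamM τ = 1 - τ := by rw [hLdef, hMdef]; ring
  have hprod : lamP τ * lamM τ = -((τ / 2) ^ 2) := by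
    rw [hLdef, hMdef]
    linear_combination (-(1 / 4 : ℝ)) * hD2
  obtain ⟨np, hnpdef⟩ : ∃ x : ℝ, Real.sqrt ((lamP τ) ^ 2 + (τ / 2) ^ 2) = x :=
    ⟨Real.sqrt ((lamP τ) ^ 2 + (τ / 2) ^ 2), rfl⟩
  obtain ⟨nm, hnmdef⟩ : ∃ x : ℝ, Real.sqrt ((lamM τ) ^ 2 + (τ / 2) ^ 2) = x :=
    ⟨Real.sqrt ((lamM τ) ^ 2 + (τ / 2) ^ 2), rfl⟩
  have hnp_pos : 0 < np := by
    rw [← hnpdef]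
    exact Real.sqrt_pos.mpr (by nlinarith [mul_pos hτpos hτpos, sq_nonneg (lamP τ)])
  have hnm_pos : 0 < nm := by
    rw [← hnmdef]
    exact Real.sqrt_pos.mpr (by nlinarith [mul_pos hτpos hτpos, sq_nonneg (lamM τ)])
  have hnp0 : np ≠ 0 := ne_of_gt hnp_pos
  have hnm0 : nm ≠ 0 := ne_of_gt hnm_pos
  have hnp2 : np ^ 2 = (lamP τ) ^ 2 + (τ / 2) ^ 2 := by
    rw [← hnpdef]; exact Real.sq_sqrt (by positivity)
  have hnm2 : nm ^ 2 = (lamM τ) ^ 2 + (τ / 2) ^ 2 := by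
    rw [← hnmdef]; exact Real.sq_sqrt (by positivity)
  have hnpsq : np ^ 2 = lamP τ * (lamP τ - lamM τ) := by rw [hnp2]; linear_combination hprod
  have hnmsq : nm ^ 2 = -(lamM τ * (lamP τ - lamM τ)) := by rw [hnm2]; linear_combination hprod
  -- matrices
  set u : Fin (r + 1) → ℝ := fun i => if i = a ∨ i = b then 0 else 1 with hudef
  have hua : u a = 0 := if_pos (Or.inl rfl)
  have hub : u b = 0 := if_pos (Or.inr rfl)
  have hu1 : ∀ i, i ≠ a → i ≠ b → u i = 1 := fun i h1 h2 => if_neg (by tauto)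
  have hda : dFun r k σ τ (σ a) a = 0 := by
    simp only [dFun]
    rw [if_neg (by omega), if_neg (by omega)]
  have hdb : dFun r k σ τ (σ a) b = 0 := by
    simp only [dFun]
    rw [if_neg (by omega), if_neg (by omega)]
  have huda : (u * dFun r k σ τ (σ a)) a = 0 := by simp [Pi.mul_apply, hua]
  have hudb : (u * dFun r k σ τ (σ a)) b = 0 := by simp [Pi.mul_apply, hub]
  set P : Matrix (Fin (r + 1)) (Fin (r + 1)) ℝ :=
    diagonal u + Matrix.single a a (lamP τ / np) + Matrix.single b a ((τ / 2) / np) +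
      Matrix.single a b (lamM τ / nm) + Matrix.single b b ((τ / 2) / nm) with hP
  set Q : Matrix (Fin (r + 1)) (Fin (r + 1)) ℝ :=
    diagonal u + Matrix.single a a (lamP τ / np) + Matrix.single b a ((τ / 2) / np) +
      Matrix.single a b (-(lamM τ / nm)) + Matrix.single b b (-((τ / 2) / nm)) with hQ
  have hPT : Pᵀ = diagonal u + Matrix.single a a (lamP τ / np) +
      Matrix.single b a (lamM τ / nm) + Matrix.single a b ((τ / 2) / np) +
      Matrix.single b b ((τ / 2) / nm) := by
    rw [hP]
    simp only [transpose_add, diagonal_transpose, SVDAux.std_transpose]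
    abel
  have hQT : Qᵀ = diagonal u + Matrix.single a a (lamP τ / np) +
      Matrix.single b a (-(lamM τ / nm)) + Matrix.single a b ((τ / 2) / np) +
      Matrix.single b b (-((τ / 2) / nm)) := by
    rw [hQ]
    simp only [transpose_add, diagonal_transpose, SVDAux.std_transpose]
    abel
  have hPTP : Pᵀ * P = 1 := by
    rw [hPT, hP, SVDAux.block_mul_block a b hab u u hua hub hua hub]
    refine SVDAux.assemble_one a b hab u hu1 hua hub ?_ ?_ ?_ ?_
    · field_simp
      linear_combination (-4 : ℝ) * hnp2
    · field_simp
      linear_combination (4 : ℝ) * hprod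
    · field_simp
      linear_combination (4 : ℝ) * hprod
    · field_simp
      linear_combination (-4 : ℝ) * hnm2
  have hQTQ : Qᵀ * Q = 1 := by
    rw [hQT, hQ, SVDAux.block_mul_block a b hab u u hua hub hua hub]
    refine SVDAux.assemble_one a b hab u hu1 hua hub ?_ ?_ ?_ ?_
    · field_simp
      linear_combination (-4 : ℝ) * hnp2
    · field_simp
      linear_combination (-4 : ℝ) * hprod
    · field_simp
      linear_combination (-4 : ℝ) * hprod
    · field_simp
      linear_combination (-4 : ℝ) * hnm2
  -- key middle identity
  have hkey : P * diagonal (sFun r k σ τ (σ a)) * Qᵀ =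
      diagonal σ + (τ * σ a) • blockD r k := by
    rw [middle_decomp r k hk1 hkr a b ha hb σ hσzero τ]
    rw [diag_s_decomp r k hk1 hkr a b ha hb σ τ (σ a)]
    rw [hP, hQT]
    rw [SVDAux.block_mul_block a b hab u (dFun r k σ τ (σ a)) hua hub hda hdb]
    rw [SVDAux.block_mul_block a b hab (u * dFun r k σ τ (σ a)) u huda hudb hua hub]
    refine SVDAux.assemble_eq a b ?_ ?_ ?_ ?_ ?_
    · funext i
      by_cases hia : i = a
      · subst hia
        simp only [Pi.mul_apply, hua, zero_mul, mul_zero]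
        exact hda.symm
      · by_cases hib : i = b
        · subst hib
          simp only [Pi.mul_apply, hub, zero_mul, mul_zero]
          exact hdb.symm
        · simp [Pi.mul_apply, hu1 i hia hib]
    · field_simp
      ring_nf
      rw [hnpsq, hnmsq]
      linear_combination (-(σ a) * lamP τ * lamM τ * (lamP τ - lamM τ)^2 : ℝ) * hsum
    · field_simp
      ring_nf
      rw [hnpsq, hnmsq]
      ring
    · field_simp
      ring_nf
      rw [hnpsq, hnmsq]
      ring
    · field_simp
      ring_nf
      rw [hnpsq, hnmsq]
      ring
  -- orthonormal factors
  have hU'o : (U * P)ᵀ * (U * P) = 1 := by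
    rw [transpose_mul, Matrix.mul_assoc, ← Matrix.mul_assoc Uᵀ U P, hU, Matrix.one_mul, hPTP]
  have hV'o : (V * Q)ᵀ * (V * Q) = 1 := by
    rw [transpose_mul, Matrix.mul_assoc, ← Matrix.mul_assoc Vᵀ V Q, hV, Matrix.one_mul, hQTQ]
  have expand : (U * P) * diagonal (sFun r k σ τ (σ a)) * (V * Q)ᵀ =
      U * (P * diagonal (sFun r k σ τ (σ a)) * Qᵀ) * Vᵀ := by
    rw [transpose_mul]
    simp only [Matrix.mul_assoc]
  have hXtZ : X + t • Z = (U * P) * diagonal (sFun r k σ τ (σ a)) * (V * Q)ᵀ := by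
    rw [hX, hZ', expand, hkey, Matrix.mul_add, Matrix.add_mul, Matrix.mul_smul,
      Matrix.smul_mul, smul_smul]
    congr 2
    rw [← hτdef]
    field_simp
  have hspos : ∀ i, 0 < sFun r k σ τ (σ a) i := by
    intro i
    simp only [sFun]
    split_ifs with h1 h2 h3
    · exact hσpos i (by omega)
    · exact mul_pos hσa hLpos
    · exact neg_pos.mpr (mul_neg_of_pos_of_neg hσa hMneg)
    · nlinarith [mul_pos hτpos hσa]
  refine ⟨?_, U * P, V * Q, sFun r k σ τ (σ a), hU'o, hV'o, hspos, hXtZ, ?_⟩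
  · have hup : (X + t • Z).rank ≤ r + 1 := by
      rw [hXtZ]
      calc ((U * P) * diagonal (sFun r k σ τ (σ a)) * (V * Q)ᵀ).rank
          ≤ ((U * P) * diagonal (sFun r k σ τ (σ a))).rank := Matrix.rank_mul_le_left _ _
        _ ≤ (U * P).rank := Matrix.rank_mul_le_left _ _
        _ ≤ Fintype.card (Fin (r + 1)) := Matrix.rank_le_card_width _
        _ = r + 1 := Fintype.card_fin _
    have hdiagrank : (diagonal (sFun r k σ τ (σ a))).rank = r + 1 := by
      rw [Matrix.rank_diagonal]
      rw [Fintype.card_congr (Equiv.subtypeUnivEquiv (fun i => (hspos i).ne'))]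
      exact Fintype.card_fin _
    have hlow : r + 1 ≤ (X + t • Z).rank := by
      have hdg : diagonal (sFun r k σ τ (σ a)) = (U * P)ᵀ * (X + t • Z) * (V * Q) := by
        rw [hXtZ]
        have : (U * P)ᵀ * ((U * P) * diagonal (sFun r k σ τ (σ a)) * (V * Q)ᵀ) * (V * Q) =
            ((U * P)ᵀ * (U * P)) * diagonal (sFun r k σ τ (σ a)) * ((V * Q)ᵀ * (V * Q)) := by
          simp only [Matrix.mul_assoc]
        rw [this, hU'o, hV'o, Matrix.one_mul, Matrix.mul_one]
      calc r + 1 = (diagonal (sFun r k σ τ (σ a))).rank := hdiagrank.symm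
        _ = ((U * P)ᵀ * (X + t • Z) * (V * Q)).rank := by rw [hdg]
        _ ≤ ((U * P)ᵀ * (X + t • Z)).rank := Matrix.rank_mul_le_left _ _
        _ ≤ (X + t • Z).rank := Matrix.rank_mul_le_right _ _
    omega
  · exact map_sFun r k hk1 hkr a b ha hb σ τ (σ a)
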